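/- arXiv:2501.02900 — 13 statements merged into one kernel-verified Lean document; each statement's English description precedes it below -/
import Mathlib

section
/- Let T > 0, let f : ℝ → ℝ be continuous and T-periodic, and let γ : ℝ → ℝ be differentiable, T-periodic, and satisfy γ'(t) + γ(t)² = f(t) for all t ∈ ℝ. Set ᾱ := (1/T)∫₀ᵀ γ(s) ds and define y(t) := exp(∫₀ᵗ (γ(s) − ᾱ) ds). Then y is positive, T-periodic, twice differentiable, and satisfies −y''(t) − 2ᾱ y'(t) − ᾱ² y(t) = −f(t) y(t) for all t ∈ ℝ. -/
/-- From a `T`-periodic solution of the Riccati equation `γ' + γ² = f`, the function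
`y(t) = exp(∫₀ᵗ (γ − ᾱ))`, with `ᾱ` the average of `γ` over a period, is a positive,
`T`-periodic, twice differentiable solution of `−y'' − 2ᾱ y' − ᾱ² y = −f y`. -/
theorem stmt_0 (T : ℝ) (hT : 0 < T) (f γ : ℝ → ℝ)
    (hf : Continuous f) (hfper : ∀ t, f (t + T) = f t)
    (hγd : Differentiable ℝ γ) (hγper : ∀ t, γ (t + T) = γ t)
    (hric : ∀ t, deriv γ t + γ t ^ 2 = f t)
    (α : ℝ) (hα : α = (1 / T) * ∫ s in (0:ℝ)..T, γ s)
    (y : ℝ → ℝ) (hy : ∀ t, y t = Real.exp (∫ s in (0:ℝ)..t, (γ s - α))) :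
    (∀ t, 0 < y t) ∧ (∀ t, y (t + T) = y t) ∧
    Differentiable ℝ y ∧ Differentiable ℝ (deriv y) ∧
    (∀ t, -deriv (deriv y) t - 2 * α * deriv y t - α ^ 2 * y t = -f t * y t) := by
  have hcont : Continuous (fun s => γ s - α) := hγd.continuous.sub continuous_const
  have hpos : ∀ t, 0 < y t := fun t => (hy t) ▸ Real.exp_pos _
  -- derivative of G
  have hG : ∀ t, HasDerivAt (fun t => ∫ s in (0:ℝ)..t, (γ s - α)) (γ t - α) t := by
    intro t
    exact intervalIntegral.integral_hasDerivAt_right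
      (hcont.intervalIntegrable _ _)
      (hcont.stronglyMeasurableAtFilter _ _)
      hcont.continuousAt
  have hy' : ∀ t, HasDerivAt y ((γ t - α) * y t) t := by
    intro t
    have := ((hG t).exp)
    have heq : y = fun t => Real.exp (∫ s in (0:ℝ)..t, (γ s - α)) := funext hy
    rw [heq]
    simpa [← hy t, mul_comm] using this
  have hdy : ∀ t, deriv y t = (γ t - α) * y t := fun t => (hy' t).deriv
  have hyd : Differentiable ℝ y := fun t => (hy' t).differentiableAt
  have hy'' : ∀ t, HasDerivAt (deriv y)
      (deriv γ t * y t + (γ t - α) * ((γ t - α) * y t)) t := by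
    intro t
    have h1 : HasDerivAt (fun t => (γ t - α) * y t)
        ((deriv γ t - 0) * y t + (γ t - α) * ((γ t - α) * y t)) t :=
      (((hγd t).hasDerivAt).sub (hasDerivAt_const t α)).mul (hy' t)
    have heq : deriv y = fun t => (γ t - α) * y t := funext hdy
    rw [heq]
    simpa using h1
  have hdyd : Differentiable ℝ (deriv y) := fun t => (hy'' t).differentiableAt
  refine ⟨hpos, ?_, hyd, hdyd, ?_⟩
  · intro t
    have hper : Function.Periodic (fun s => γ s - α) T := fun s => by simp [hγper s]
    have hint0 : (∫ s in (0:ℝ)..(0+T), (γ s - α)) = 0 := by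
      rw [intervalIntegral.integral_sub (hγd.continuous.intervalIntegrable _ _)
        (intervalIntegrable_const)]
      rw [intervalIntegral.integral_const]
      have : (∫ s in (0:ℝ)..(0+T), γ s) = T * α := by
        rw [hα]; field_simp; rw [zero_add]
      rw [this]; simp [smul_eq_mul, mul_comm]
    have key : (∫ s in t..(t+T), (γ s - α)) = 0 := by
      rw [hper.intervalIntegral_add_eq t 0]; simpa using hint0
    have hsplit : (∫ s in (0:ℝ)..(t+T), (γ s - α)) =
        (∫ s in (0:ℝ)..t, (γ s - α)) + (∫ s in t..(t+T), (γ s - α)) :=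
      (intervalIntegral.integral_add_adjacent_intervals
        (hcont.intervalIntegrable _ _) (hcont.intervalIntegrable _ _)).symm
    rw [hy (t+T), hy t, hsplit, key, add_zero]
  · intro t
    have h2 := (hy'' t).deriv
    rw [h2, hdy t]
    have := hric t
    nlinarith [hpos t]
end

section
/- Let T > 0, let f : ℝ → ℝ be continuous and T-periodic, let α ∈ ℝ, and let y : ℝ → ℝ be twice differentiable, T-periodic, everywhere positive, and satisfy −y''(t) − 2α y'(t) − α² y(t) = −f(t) y(t) for all t ∈ ℝ. Then the function γ := α + y'/y is differentiable, T-periodic, satisfies γ'(t) + γ(t)² = f(t) for all t ∈ ℝ, and moreover (1/T)∫₀ᵀ γ(s) ds = α. -/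
/-- Converse direction: from a positive `T`-periodic twice differentiable solution `y` of
`−y'' − 2α y' − α² y = −f y`, the function `γ = α + y'/y` is a differentiable `T`-periodic
solution of the Riccati equation `γ' + γ² = f`, with average `α` over a period. -/
theorem stmt_1 (T : ℝ) (hT : 0 < T) (f : ℝ → ℝ) (α : ℝ) (y : ℝ → ℝ)
    (hf : Continuous f) (hfper : ∀ t, f (t + T) = f t)
    (hy1 : Differentiable ℝ y) (hy2 : Differentiable ℝ (deriv y))
    (hyper : ∀ t, y (t + T) = y t) (hypos : ∀ t, 0 < y t)
    (heq : ∀ t, -deriv (deriv y) t - 2 * α * deriv y t - α ^ 2 * y t = -f t * y t)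
    (γ : ℝ → ℝ) (hγ : ∀ t, γ t = α + deriv y t / y t) :
    Differentiable ℝ γ ∧ (∀ t, γ (t + T) = γ t) ∧
    (∀ t, deriv γ t + γ t ^ 2 = f t) ∧
    (1 / T) * (∫ s in (0:ℝ)..T, γ s) = α := by
  have hy0 : ∀ t, y t ≠ 0 := fun t => (hypos t).ne'
  have hγfun : γ = fun t => α + deriv y t / y t := funext hγ
  have hγdiff : Differentiable ℝ γ := by
    rw [hγfun]
    exact (differentiable_const α).add (hy2.div hy1 hy0)
  have hdper : ∀ t, deriv y (t + T) = deriv y t := by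
    intro t
    have h1 : (fun s => y (s + T)) = y := funext hyper
    have h2 : deriv (fun s => y (s + T)) t = deriv y (t + T) := by
      simpa using deriv_comp_add_const y T t
    rw [h1] at h2
    exact h2.symm
  have hγper : ∀ t, γ (t + T) = γ t := by
    intro t; rw [hγ, hγ, hdper, hyper]
  have hric : ∀ t, deriv γ t + γ t ^ 2 = f t := by
    intro t
    have hd : deriv γ t = (deriv (deriv y) t * y t - deriv y t * deriv y t) / (y t) ^ 2 := by
      rw [hγfun]
      rw [deriv_fun_add (differentiableAt_const α) ((hy2 t).fun_div (hy1 t) (hy0 t)),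
        deriv_const, zero_add, deriv_fun_div (hy2 t) (hy1 t) (hy0 t)]
    rw [hd, hγ]
    have h := heq t
    have hy := hy0 t
    field_simp
    nlinarith [sq_nonneg (y t), hypos t, mul_pos (hypos t) (hypos t)]
  refine ⟨hγdiff, hγper, hric, ?_⟩
  have hcd : Continuous (deriv y) := hy2.continuous
  have hcont : Continuous fun t => deriv y t / y t :=
    hcd.div hy1.continuous hy0
  have hlog : ∀ t ∈ Set.uIcc (0:ℝ) T, HasDerivAt (fun s => Real.log (y s))
      (deriv y t / y t) t := by
    intro t _
    have := (Real.hasDerivAt_log (hy0 t)).comp t (hy1 t).hasDerivAt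
    rw [div_eq_inv_mul]; exact this
  have hint : (∫ s in (0:ℝ)..T, deriv y s / y s)
      = Real.log (y T) - Real.log (y 0) :=
    intervalIntegral.integral_eq_sub_of_hasDerivAt hlog
      (hcont.intervalIntegrable 0 T)
  have hyT : y T = y 0 := by simpa using hyper 0
  have hzero : (∫ s in (0:ℝ)..T, deriv y s / y s) = 0 := by
    rw [hint, hyT, sub_self]
  have hsplit : (∫ s in (0:ℝ)..T, γ s)
      = (∫ s in (0:ℝ)..T, (α:ℝ)) + ∫ s in (0:ℝ)..T, deriv y s / y s := by
    rw [hγfun]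
    exact intervalIntegral.integral_add (intervalIntegrable_const)
      (hcont.intervalIntegrable 0 T)
  rw [hsplit, hzero, add_zero, intervalIntegral.integral_const, smul_eq_mul, sub_zero]
  field_simp
end

section
/- Let T > 0 and let f : ℝ → ℝ be continuous, T-periodic, with f(t) ≥ 0 for all t and f(t₀) > 0 for some t₀. If γ₁ and γ₂ are two differentiable T-periodic solutions of the Riccati equation γ' + γ² = f that are not identical (i.e. γ₁(s) ≠ γ₂(s) for some s ∈ ℝ), then ∫₀ᵀ γ₁(s) ds = −∫₀ᵀ γ₂(s) ds and ∫₀ᵀ γ₁(s) ds ≠ 0. -/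
open MeasureTheory intervalIntegral Set
open scoped ENNReal

private lemma ftc_hasDerivAt (g : ℝ → ℝ) (hg : Continuous g) (t : ℝ) :
    HasDerivAt (fun u => ∫ s in (0:ℝ)..u, g s) (g t) t :=
  intervalIntegral.integral_hasDerivAt_right (hg.intervalIntegrable _ _)
    (hg.stronglyMeasurableAtFilter _ _) hg.continuousAt

/-- Two distinct `T`-periodic solutions of the Riccati equation `γ' + γ² = f`
(with `f ≥ 0`, `f ≢ 0`) have opposite, nonzero integrals over a period. -/
theorem stmt_2 (T : ℝ) (hT : 0 < T) (f : ℝ → ℝ)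
    (hf : Continuous f) (hfper : ∀ t, f (t + T) = f t)
    (hfnn : ∀ t, 0 ≤ f t) (t₀ : ℝ) (hfpos : 0 < f t₀)
    (γ₁ γ₂ : ℝ → ℝ)
    (h1d : Differentiable ℝ γ₁) (h1p : ∀ t, γ₁ (t + T) = γ₁ t)
    (h1r : ∀ t, deriv γ₁ t + γ₁ t ^ 2 = f t)
    (h2d : Differentiable ℝ γ₂) (h2p : ∀ t, γ₂ (t + T) = γ₂ t)
    (h2r : ∀ t, deriv γ₂ t + γ₂ t ^ 2 = f t)
    (hne : ∃ s, γ₁ s ≠ γ₂ s) :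
    (∫ s in (0:ℝ)..T, γ₁ s) = -(∫ s in (0:ℝ)..T, γ₂ s) ∧
    (∫ s in (0:ℝ)..T, γ₁ s) ≠ 0 := by
  have h1c : Continuous γ₁ := h1d.continuous
  have h2c : Continuous γ₂ := h2d.continuous
  -- Part 1 --
  have part1 : (∫ s in (0:ℝ)..T, γ₁ s) = -(∫ s in (0:ℝ)..T, γ₂ s) := by
    set g : ℝ → ℝ := fun t => γ₁ t + γ₂ t with hg_def
    have hgc : Continuous g := h1c.add h2c
    set G : ℝ → ℝ := fun t => ∫ s in (0:ℝ)..t, g s with hG_def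
    have hG : ∀ t, HasDerivAt G (g t) t := ftc_hasDerivAt g hgc
    set w : ℝ → ℝ := fun t => γ₁ t - γ₂ t with hw_def
    have hw : ∀ t, HasDerivAt w (-(g t) * w t) t := by
      intro t
      have := ((h1d t).hasDerivAt).sub ((h2d t).hasDerivAt)
      refine this.congr_deriv (Eq.symm ?_)
      have e1 := h1r t
      have e2 := h2r t
      simp only [hg_def, hw_def]
      nlinarith [e1, e2]
    set h : ℝ → ℝ := fun t => w t * Real.exp (G t) with hh_def
    have hh : ∀ t, HasDerivAt h 0 t := by
      intro t
      have := (hw t).mul ((hG t).exp)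
      refine this.congr_deriv (Eq.symm ?_)
      ring
    have hconst : ∀ a b : ℝ, h a = h b := fun a b =>
      is_const_of_deriv_eq_zero (fun t => (hh t).differentiableAt)
        (fun t => (hh t).deriv) a b
    obtain ⟨s, hs⟩ := hne
    have hws : w s ≠ 0 := sub_ne_zero.mpr hs
    have hhs : h s ≠ 0 := mul_ne_zero hws (Real.exp_ne_zero _)
    have hG0 : G 0 = 0 := by simp [hG_def]
    have hwT : w T = w 0 := by
      show γ₁ T - γ₂ T = γ₁ 0 - γ₂ 0
      rw [show (T:ℝ) = 0 + T by ring, h1p 0, h2p 0]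
    have key : w 0 * Real.exp (G 0) = w T * Real.exp (G T) := hconst 0 T
    rw [hwT] at key
    have hw0 : w 0 ≠ 0 := by
      intro h0
      apply hhs
      rw [hconst s 0]
      show w 0 * Real.exp (G 0) = 0
      rw [h0, zero_mul]
    have hexp : Real.exp (G 0) = Real.exp (G T) := mul_left_cancel₀ hw0 key
    have hGT : G T = 0 := by
      have := Real.exp_eq_exp.mp hexp
      rw [← this, hG0]
    have hsplit : G T = (∫ s in (0:ℝ)..T, γ₁ s) + (∫ s in (0:ℝ)..T, γ₂ s) := by
      simp only [hG_def, hg_def]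
      exact intervalIntegral.integral_add (h1c.intervalIntegrable _ _)
        (h2c.intervalIntegrable _ _)
    linarith [hsplit ▸ hGT]
  refine ⟨part1, ?_⟩
  -- Part 2 --
  intro hA
  set G₁ : ℝ → ℝ := fun t => ∫ s in (0:ℝ)..t, γ₁ s with hG1_def
  have hG1 : ∀ t, HasDerivAt G₁ (γ₁ t) t := ftc_hasDerivAt γ₁ h1c
  set u : ℝ → ℝ := fun t => Real.exp (G₁ t) with hu_def
  have hupos : ∀ t, 0 < u t := fun t => Real.exp_pos _
  have huc : Continuous u :=
    Real.continuous_exp.comp (Differentiable.continuous fun t => (hG1 t).differentiableAt)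
  set v : ℝ → ℝ := fun t => γ₁ t * u t with hv_def
  have hv : ∀ t, HasDerivAt v (f t * u t) t := by
    intro t
    have := ((h1d t).hasDerivAt).mul ((hG1 t).exp)
    refine this.congr_deriv (Eq.symm ?_)
    have e1 := h1r t
    rw [← e1]
    show (deriv γ₁ t + γ₁ t ^ 2) * Real.exp (G₁ t) = _
    ring
  have hint : (∫ s in (0:ℝ)..T, f s * u s) = v T - v 0 :=
    intervalIntegral.integral_eq_sub_of_hasDerivAt (fun x _ => hv x)
      ((hf.mul huc).intervalIntegrable _ _)
  have hG1T : G₁ T = 0 := hA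
  have hvT : v T = v 0 := by
    simp only [hv_def, hu_def, hG1T]
    have h10 : γ₁ T = γ₁ 0 := by rw [show (T:ℝ) = 0 + T by ring, h1p 0]
    rw [h10]
    simp [hG1_def]
  have hzero : (∫ s in (0:ℝ)..T, f s * u s) = 0 := by rw [hint, hvT, sub_self]
  -- now show the integral is positive, contradiction
  have hper : Function.Periodic f T := hfper
  set c : ℝ := t₀ - ⌊t₀ / T⌋ * T with hc_def
  have hc0 : 0 ≤ c := Int.sub_floor_div_mul_nonneg t₀ hT
  have hcT : c < T := Int.sub_floor_div_mul_lt t₀ hT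
  have hfc : 0 < f c := by
    have := hper.sub_int_mul_eq (x := t₀) ⌊t₀ / T⌋
    rw [hc_def, this]; exact hfpos
  -- neighborhood where f > 0
  have hopen : IsOpen (f ⁻¹' Ioi 0) := isOpen_Ioi.preimage hf
  obtain ⟨δ, hδ, hball⟩ := Metric.isOpen_iff.mp hopen c hfc
  set b : ℝ := min (c + δ) T with hb_def
  have hcb : c < b := lt_min (by linarith) hcT
  have hsubset : Ioo c b ⊆ Function.support (fun s => f s * u s) ∩ Ioc 0 T := by
    intro x hx
    constructor
    · have hxball : x ∈ Metric.ball c δ := by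
        rw [Metric.mem_ball, Real.dist_eq, abs_of_nonneg (by linarith [hx.1])]
        have : x < c + δ := lt_of_lt_of_le hx.2 (min_le_left _ _)
        linarith
      have hfx : 0 < f x := hball hxball
      exact (mul_pos hfx (hupos x)).ne'
    · exact ⟨lt_of_le_of_lt hc0 hx.1, le_trans hx.2.le (min_le_right _ _)⟩
  have hpos : 0 < ∫ s in (0:ℝ)..T, f s * u s := by
    rw [intervalIntegral.integral_pos_iff_support_of_nonneg_ae]
    · refine ⟨hT, ?_⟩
      calc (0:ℝ≥0∞) < volume (Ioo c b) := by
            rw [Real.volume_Ioo]; simp [hcb]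
        _ ≤ volume (Function.support (fun s => f s * u s) ∩ Ioc 0 T) :=
            measure_mono hsubset
    · exact Filter.Eventually.of_forall fun x => mul_nonneg (hfnn x) (hupos x).le
    · exact (hf.mul huc).intervalIntegrable _ _
  exact absurd hzero hpos.ne'
end

section
/- Let T > 0 and let f : ℝ → ℝ be continuous, T-periodic, with f(t) ≥ 0 for all t and f(t₀) > 0 for some t₀. Then every differentiable T-periodic solution γ of the Riccati equation γ' + γ² = f satisfies ∫₀ᵀ γ(s) ds ≠ 0. -/
/-- Every `T`-periodic solution of the Riccati equation `γ' + γ² = f`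
(with `f ≥ 0`, `f ≢ 0`) has nonzero integral over a period. -/
theorem stmt_3 (T : ℝ) (hT : 0 < T) (f : ℝ → ℝ)
    (hf : Continuous f) (hfper : ∀ t, f (t + T) = f t)
    (hfnn : ∀ t, 0 ≤ f t) (t₀ : ℝ) (hfpos : 0 < f t₀)
    (γ : ℝ → ℝ)
    (hd : Differentiable ℝ γ) (hp : ∀ t, γ (t + T) = γ t)
    (hr : ∀ t, deriv γ t + γ t ^ 2 = f t) :
    (∫ s in (0:ℝ)..T, γ s) ≠ 0 := by
  intro h
  have hγc : Continuous γ := hd.continuous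
  -- F t = ∫₀ᵗ γ
  set F : ℝ → ℝ := fun t => ∫ s in (0:ℝ)..t, γ s with hFdef
  have hF : ∀ t, HasDerivAt F (γ t) t := fun t =>
    (hγc.integral_hasStrictDerivAt 0 t).hasDerivAt
  have hFc : Continuous F := by
    rw [continuous_iff_continuousAt]
    exact fun t => (hF t).continuousAt
  -- y = exp ∘ F, g = γ * y, g' = f * y
  set y : ℝ → ℝ := fun t => Real.exp (F t) with hydef
  have hypos : ∀ t, 0 < y t := fun t => Real.exp_pos _
  have hy : ∀ t, HasDerivAt y (γ t * y t) t := fun t => by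
    simpa [hydef, mul_comm] using (hF t).exp
  set g : ℝ → ℝ := fun t => γ t * y t with hgdef
  have hg : ∀ t, HasDerivAt g (f t * y t) t := by
    intro t
    have h1 : HasDerivAt g (deriv γ t * y t + γ t * (γ t * y t)) t :=
      ((hd t).hasDerivAt).mul (hy t)
    have h2 : deriv γ t * y t + γ t * (γ t * y t) = f t * y t := by
      have h3 : deriv γ t = f t - γ t ^ 2 := by linarith [hr t]
      rw [h3]; ring
    rwa [h2] at h1
  have hyc : Continuous y := Real.continuous_exp.comp hFc
  have hcont : Continuous fun t => f t * y t := hf.mul hyc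
  -- F is T-periodic since ∫₀ᵀ γ = 0
  have hγper : Function.Periodic γ T := hp
  have hFper : ∀ t, F (t + T) = F t := by
    intro t
    have h1 : F (t + T) - F t = ∫ s in t..t + T, γ s := by
      rw [hFdef]
      simp only
      rw [← intervalIntegral.integral_add_adjacent_intervals
        (hγc.intervalIntegrable 0 t) (hγc.intervalIntegrable t (t + T))]
      ring
    have h2 : (∫ s in t..t + T, γ s) = ∫ s in (0:ℝ)..0 + T, γ s :=
      hγper.intervalIntegral_add_eq t 0
    rw [h2] at h1
    simp only [zero_add] at h1
    rw [h] at h1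
    linarith
  -- the integrand f * y is T-periodic
  have hφper : Function.Periodic (fun t => f t * y t) T := by
    intro t
    simp only [hydef, hFper t, hfper t]
  -- FTC : ∫₀ᵀ f y = g T - g 0 = 0
  have hint : (∫ s in (0:ℝ)..T, f s * y s) = g T - g 0 :=
    intervalIntegral.integral_eq_sub_of_hasDerivAt (fun x _ => hg x)
      (hcont.intervalIntegrable 0 T)
  have hFT : F T = 0 := by
    have : F T = ∫ s in (0:ℝ)..T, γ s := rfl
    rw [this, h]
  have hF0 : F 0 = 0 := by simp [hFdef]
  have hgT : g T = g 0 := by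
    have hγT : γ T = γ 0 := by simpa using hp 0
    simp [hgdef, hydef, hFT, hF0, hγT]
  have hzero : (∫ s in (0:ℝ)..T, f s * y s) = 0 := by
    rw [hint, hgT, sub_self]
  -- but the integral over a period containing t₀ is positive
  have hshift : (∫ s in (0:ℝ)..T, f s * y s)
      = ∫ s in (t₀ - T / 2)..(t₀ - T / 2) + T, f s * y s := by
    have := hφper.intervalIntegral_add_eq (t₀ - T / 2) 0
    simpa using this.symm
  have hpos : 0 < ∫ s in (t₀ - T / 2)..(t₀ - T / 2) + T, f s * y s := by
    apply intervalIntegral.integral_pos (by linarith)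
    · exact hcont.continuousOn
    · exact fun x _ => mul_nonneg (hfnn x) (hypos x).le
    · exact ⟨t₀, ⟨by linarith, by linarith⟩, mul_pos hfpos (hypos t₀)⟩
  rw [← hshift, hzero] at hpos
  exact lt_irrefl 0 hpos
end

section
/- Let T > 0 and let f : ℝ → ℝ be continuous, T-periodic, with f(t) ≥ 0 for all t and f(t₀) > 0 for some t₀. Let γ be a differentiable T-periodic solution of the Riccati equation γ' + γ² = f. If ∫₀ᵀ γ(s) ds > 0 then γ(t) > 0 for all t ∈ ℝ, and if ∫₀ᵀ γ(s) ds < 0 then γ(t) < 0 for all t ∈ ℝ. -/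
open Set intervalIntegral

/-- If a T-periodic Riccati solution with nonneg datum vanishes somewhere, the datum
vanishes on a full period. -/
lemma riccati_zero_aux (T : ℝ) (hT : 0 < T) (f : ℝ → ℝ)
    (hf : Continuous f) (hfnn : ∀ t, 0 ≤ f t)
    (γ : ℝ → ℝ) (hd : Differentiable ℝ γ) (hp : ∀ t, γ (t + T) = γ t)
    (hr : ∀ t, deriv γ t + γ t ^ 2 = f t) (a : ℝ) (ha : γ a = 0) :
    ∀ t ∈ Icc a (a + T), f t = 0 := by
  have hγc : Continuous γ := hd.continuous
  set G : ℝ → ℝ := fun t => ∫ s in a..t, γ s with hG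
  have hGd : ∀ t, HasDerivAt G (γ t) t := fun t =>
    intervalIntegral.integral_hasDerivAt_right (hγc.intervalIntegrable a t)
      (hγc.aestronglyMeasurable.stronglyMeasurableAtFilter) hγc.continuousAt
  set h : ℝ → ℝ := fun t => γ t * Real.exp (G t) with hh
  have hhd : ∀ t, HasDerivAt h (f t * Real.exp (G t)) t := by
    intro t
    have := ((hd t).hasDerivAt).mul ((hGd t).exp)
    refine (this : HasDerivAt h _ t).congr_deriv ?_
    rw [← hr t]; ring
  have hmono : Monotone h :=
    monotone_of_deriv_nonneg (fun t => (hhd t).differentiableAt)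
      (fun t => by rw [(hhd t).deriv]; exact mul_nonneg (hfnn t) (Real.exp_nonneg _))
  have hha : h a = 0 := by simp [hh, ha]
  have hhaT : h (a + T) = 0 := by simp [hh, hp a, ha]
  have hzero : ∀ t ∈ Icc a (a + T), h t = 0 := fun t ht =>
    le_antisymm (hhaT ▸ hmono ht.2) (hha ▸ hmono ht.1)
  have hfIoo : EqOn f (fun _ => (0:ℝ)) (Ioo a (a + T)) := by
    intro t ht
    have hev : h =ᶠ[nhds t] fun _ => (0:ℝ) := by
      filter_upwards [Ioo_mem_nhds ht.1 ht.2] with x hx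
      exact hzero x (Ioo_subset_Icc_self hx)
    have h1 : deriv h t = 0 := by rw [hev.deriv_eq]; simp
    rw [(hhd t).deriv] at h1
    have := (mul_eq_zero.mp h1).resolve_right (Real.exp_ne_zero _)
    simpa using this
  have hcl : EqOn f (fun _ => (0:ℝ)) (closure (Ioo a (a + T))) :=
    hfIoo.closure hf continuous_const
  intro t ht
  have : closure (Ioo a (a + T)) = Icc a (a + T) :=
    closure_Ioo (by linarith)
  exact hcl (this ▸ ht)

/-- Sign of periodic Riccati solutions according to the sign of their average:
if the integral of `γ` over a period is positive then `γ > 0` everywhere, and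
if it is negative then `γ < 0` everywhere. -/
theorem stmt_4 (T : ℝ) (hT : 0 < T) (f : ℝ → ℝ)
    (hf : Continuous f) (hfper : ∀ t, f (t + T) = f t)
    (hfnn : ∀ t, 0 ≤ f t) (t₀ : ℝ) (hfpos : 0 < f t₀)
    (γ : ℝ → ℝ)
    (hd : Differentiable ℝ γ) (hp : ∀ t, γ (t + T) = γ t)
    (hr : ∀ t, deriv γ t + γ t ^ 2 = f t) :
    ((0 < ∫ s in (0:ℝ)..T, γ s) → ∀ t, 0 < γ t) ∧
    ((∫ s in (0:ℝ)..T, γ s) < 0 → ∀ t, γ t < 0) := by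
  have hγc : Continuous γ := hd.continuous
  -- γ never vanishes
  have hne : ∀ t, γ t ≠ 0 := by
    intro a ha
    have hz := riccati_zero_aux T hT f hf hfnn γ hd hp hr a ha
    have hper : Function.Periodic f T := hfper
    obtain ⟨y, hy, hy'⟩ := hper.exists_mem_Ico hT t₀ a
    have : f y = 0 := hz y ⟨hy.1, hy.2.le⟩
    rw [hy', this] at hfpos
    exact lt_irrefl _ hfpos
  -- constant sign
  have hsign : (∀ t, 0 < γ t) ∨ (∀ t, γ t < 0) := by
    by_contra hc
    push_neg at hc
    obtain ⟨⟨x, hx⟩, ⟨y, hy⟩⟩ := hc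
    have hx' : γ x < 0 := lt_of_le_of_ne hx (hne x)
    have hy' : 0 < γ y := lt_of_le_of_ne hy (Ne.symm (hne y))
    rcases le_total x y with hxy | hxy
    · obtain ⟨z, _, hz⟩ := intermediate_value_Icc hxy (hγc.continuousOn)
        (show (0:ℝ) ∈ Icc (γ x) (γ y) from ⟨hx'.le, hy'.le⟩)
      exact hne z hz
    · obtain ⟨z, _, hz⟩ := intermediate_value_Icc' hxy (hγc.continuousOn)
        (show (0:ℝ) ∈ Icc (γ x) (γ y) from ⟨hx'.le, hy'.le⟩)
      exact hne z hz
  constructor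
  · intro hint
    rcases hsign with hpos | hneg
    · exact hpos
    · exfalso
      have : (0:ℝ) < ∫ s in (0:ℝ)..T, -γ s :=
        intervalIntegral_pos_of_pos ((hγc.neg).intervalIntegrable 0 T)
          (fun x => neg_pos.mpr (hneg x)) hT
      rw [intervalIntegral.integral_neg] at this
      linarith
  · intro hint
    rcases hsign with hpos | hneg
    · exfalso
      have : (0:ℝ) < ∫ s in (0:ℝ)..T, γ s :=
        intervalIntegral_pos_of_pos (hγc.intervalIntegrable 0 T) hpos hT
      linarith
    · exact hneg
end

section
/- Let T > 0 and let f : ℝ → ℝ be continuous, T-periodic, with f(t) ≥ 0 for all t and f(t₀) > 0 for some t₀. If γ₁ and γ₂ are differentiable T-periodic solutions of the Riccati equation γ' + γ² = f with γ₁(t) ≥ 0 and γ₂(t) ≥ 0 for all t, then γ₁ = γ₂. Likewise, if γ₁(t) ≤ 0 and γ₂(t) ≤ 0 for all t, then γ₁ = γ₂. -/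
open MeasureTheory intervalIntegral Set Function

/-- A continuous nonnegative function with zero integral vanishes on the open interval. -/
lemma aux_zero (g : ℝ → ℝ) (hg : Continuous g) (hnn : ∀ t, 0 ≤ g t) (a b : ℝ) (hab : a < b)
    (hint : ∫ t in a..b, g t = 0) : ∀ t ∈ Set.Ioo a b, g t = 0 := by
  intro t ht
  by_contra h
  have hpos : 0 < ∫ t in a..b, g t := by
    rw [intervalIntegral.integral_pos_iff_support_of_nonneg_ae
      (Filter.Eventually.of_forall hnn) (hg.intervalIntegrable a b)]
    refine ⟨hab, ?_⟩
    have hopen : IsOpen (Function.support g ∩ Set.Ioo a b) := by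
      have : IsOpen (Function.support g) := by
        rw [Function.support_eq_preimage]
        exact isOpen_compl_singleton.preimage hg
      exact this.inter isOpen_Ioo
    have hne : (Function.support g ∩ Set.Ioo a b).Nonempty := ⟨t, h, ht⟩
    calc (0 : ENNReal) < volume (Function.support g ∩ Set.Ioo a b) := hopen.measure_pos _ hne
      _ ≤ volume (Function.support g ∩ Set.Ioc a b) :=
        measure_mono (Set.inter_subset_inter_right _ Set.Ioo_subset_Ioc_self)
  rw [hint] at hpos
  exact lt_irrefl 0 hpos

/-- Uniqueness of nonnegative `T`-periodic solutions of the Riccati equation. -/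
lemma riccati_aux (T : ℝ) (hT : 0 < T) (γ₁ γ₂ : ℝ → ℝ)
    (h1d : Differentiable ℝ γ₁) (h1p : ∀ t, γ₁ (t + T) = γ₁ t)
    (h2d : Differentiable ℝ γ₂) (h2p : ∀ t, γ₂ (t + T) = γ₂ t)
    (heq : ∀ t, deriv γ₁ t + γ₁ t ^ 2 = deriv γ₂ t + γ₂ t ^ 2)
    (hs1 : ∀ t, 0 ≤ γ₁ t) (hs2 : ∀ t, 0 ≤ γ₂ t) : γ₁ = γ₂ := by
  set g : ℝ → ℝ := fun t => γ₁ t + γ₂ t with hgdef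
  have hgc : Continuous g := h1d.continuous.add h2d.continuous
  set G : ℝ → ℝ := fun t => ∫ s in (0:ℝ)..t, g s with hGdef
  have hGd : ∀ t, HasDerivAt G (g t) t := fun t =>
    intervalIntegral.integral_hasDerivAt_right (hgc.intervalIntegrable _ _)
      (hgc.stronglyMeasurableAtFilter _ _) hgc.continuousAt
  set h : ℝ → ℝ := fun t => (γ₁ t - γ₂ t) * Real.exp (G t) with hhdef
  have hd : ∀ t, HasDerivAt h 0 t := by
    intro t
    have hδ : HasDerivAt (fun t => γ₁ t - γ₂ t) (-(g t) * (γ₁ t - γ₂ t)) t := by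
      have h' := (h1d t).hasDerivAt.sub (h2d t).hasDerivAt
      have hval : deriv γ₁ t - deriv γ₂ t = -(g t) * (γ₁ t - γ₂ t) := by
        have := heq t
        simp only [hgdef]
        nlinarith [heq t]
      rwa [hval] at h'
    have hE : HasDerivAt (fun t => Real.exp (G t)) (Real.exp (G t) * g t) t := (hGd t).exp
    have := hδ.mul hE
    convert this using 1
    · rfl
    · rfl
    · rfl
    · ring
  have hconst : ∀ t, h t = h 0 :=
    fun t => is_const_of_deriv_eq_zero (fun s => (hd s).differentiableAt)
      (fun s => (hd s).deriv) t 0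
  have hG0 : G 0 = 0 := by simp [hGdef]
  have key : ∀ t, (γ₁ t - γ₂ t) * Real.exp (G t) = γ₁ 0 - γ₂ 0 := by
    intro t
    have := hconst t
    simpa [hhdef, hG0] using this
  by_cases h0 : γ₁ 0 = γ₂ 0
  · funext t
    have hk := key t
    rw [h0, sub_self] at hk
    rcases mul_eq_zero.mp hk with hk | hk
    · linarith [sub_eq_zero.mp hk]
    · exact absurd hk (Real.exp_ne_zero _)
  · exfalso
    have hδT : γ₁ T - γ₂ T = γ₁ 0 - γ₂ 0 := by
      have e1 := h1p 0
      have e2 := h2p 0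
      rw [zero_add] at e1 e2
      rw [e1, e2]
    have hGT : G T = 0 := by
      have hk := key T
      rw [hδT] at hk
      have hδ0 : γ₁ 0 - γ₂ 0 ≠ 0 := sub_ne_zero.mpr h0
      have hexp : Real.exp (G T) = 1 := by
        have : (γ₁ 0 - γ₂ 0) * Real.exp (G T) = (γ₁ 0 - γ₂ 0) * 1 := by
          rw [mul_one]; exact hk
        exact mul_left_cancel₀ hδ0 this
      have h1 : Real.exp (G T) = Real.exp 0 := by rw [hexp, Real.exp_zero]
      exact Real.exp_eq_exp.mp h1
    have hper : Function.Periodic g T := fun t => by simp [hgdef, h1p t, h2p t]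
    have hnn : ∀ t, 0 ≤ g t := fun t => add_nonneg (hs1 t) (hs2 t)
    have hzero : ∀ t, g t = 0 := by
      intro t
      have hint : ∫ s in (t - T/2)..(t - T/2 + T), g s = 0 := by
        rw [hper.intervalIntegral_add_eq (t - T/2) 0]
        rw [zero_add]
        exact hGT
      exact aux_zero g hgc hnn _ _ (by linarith) hint t ⟨by linarith, by linarith⟩
    have h10 : γ₁ 0 = 0 := by
      have := hzero 0
      simp only [hgdef] at this
      linarith [hs1 0, hs2 0]
    have h20 : γ₂ 0 = 0 := by
      have := hzero 0
      simp only [hgdef] at this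
      linarith [hs1 0, hs2 0]
    exact h0 (by rw [h10, h20])

/-- Uniqueness of nonnegative (resp. nonpositive) `T`-periodic solutions of the Riccati
equation `γ' + γ² = f` with `f ≥ 0`, `f ≢ 0`. -/
theorem stmt_6 (T : ℝ) (hT : 0 < T) (f : ℝ → ℝ)
    (hf : Continuous f) (hfper : ∀ t, f (t + T) = f t)
    (hfnn : ∀ t, 0 ≤ f t) (t₀ : ℝ) (hfpos : 0 < f t₀)
    (γ₁ γ₂ : ℝ → ℝ)
    (h1d : Differentiable ℝ γ₁) (h1p : ∀ t, γ₁ (t + T) = γ₁ t)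
    (h1r : ∀ t, deriv γ₁ t + γ₁ t ^ 2 = f t)
    (h2d : Differentiable ℝ γ₂) (h2p : ∀ t, γ₂ (t + T) = γ₂ t)
    (h2r : ∀ t, deriv γ₂ t + γ₂ t ^ 2 = f t) :
    ((∀ t, 0 ≤ γ₁ t) → (∀ t, 0 ≤ γ₂ t) → γ₁ = γ₂) ∧
    ((∀ t, γ₁ t ≤ 0) → (∀ t, γ₂ t ≤ 0) → γ₁ = γ₂) := by
  constructor
  · intro hs1 hs2
    exact riccati_aux T hT γ₁ γ₂ h1d h1p h2d h2p
      (fun t => (h1r t).trans (h2r t).symm) hs1 hs2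
  · intro hs1 hs2
    -- reflect: η i t = -γ i (-t) is a nonnegative periodic solution
    set η₁ : ℝ → ℝ := fun t => -γ₁ (-t) with hη₁
    set η₂ : ℝ → ℝ := fun t => -γ₂ (-t) with hη₂
    have hder : ∀ (γ : ℝ → ℝ), Differentiable ℝ γ →
        ∀ t, HasDerivAt (fun t => -γ (-t)) (deriv γ (-t)) t := by
      intro γ hγ t
      have hc : HasDerivAt (fun t : ℝ => γ (-t)) (deriv γ (-t) * (-1)) t :=
        (hγ (-t)).hasDerivAt.comp t (hasDerivAt_neg t)
      have := hc.neg
      convert this using 1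
      · rfl
      · rfl
      · rfl
      · ring
    have hper : ∀ (γ : ℝ → ℝ), (∀ t, γ (t + T) = γ t) →
        ∀ t : ℝ, -γ (-(t + T)) = -γ (-t) := by
      intro γ hγ t
      have := hγ (-(t + T))
      rw [show -(t + T) + T = -t by ring] at this
      rw [this]
    have e1d : Differentiable ℝ η₁ := fun t => ((hder γ₁ h1d t).differentiableAt : _)
    have e2d : Differentiable ℝ η₂ := fun t => ((hder γ₂ h2d t).differentiableAt : _)
    have e1r : ∀ t, deriv η₁ t + η₁ t ^ 2 = f (-t) := by
      intro t
      rw [hη₁, (hder γ₁ h1d t).deriv]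
      beta_reduce
      nlinarith [h1r (-t)]
    have e2r : ∀ t, deriv η₂ t + η₂ t ^ 2 = f (-t) := by
      intro t
      rw [hη₂, (hder γ₂ h2d t).deriv]
      beta_reduce
      nlinarith [h2r (-t)]
    have hEq := riccati_aux T hT η₁ η₂
      e1d (fun t => hper γ₁ h1p t) e2d (fun t => hper γ₂ h2p t)
      (fun t => (e1r t).trans (e2r t).symm)
      (fun t => neg_nonneg.mpr (hs1 (-t))) (fun t => neg_nonneg.mpr (hs2 (-t)))
    funext t
    have := congrFun hEq (-t)
    simp only [hη₁, hη₂, neg_neg] at this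
    linarith
end

section
/- Let T > 0 and let f : ℝ → ℝ be continuous, T-periodic, with f(t) ≥ 0 for all t and f(t₀) > 0 for some t₀. Then the Riccati equation γ' + γ² = f has at most two differentiable T-periodic solutions: if γ₁, γ₂, γ₃ are differentiable T-periodic functions each satisfying γᵢ'(t) + γᵢ(t)² = f(t) for all t, then γ₁ = γ₂ or γ₁ = γ₃ or γ₂ = γ₃. -/
lemma riccati_pair (T : ℝ) (hT : 0 < T) (f γ δ : ℝ → ℝ)
    (hγd : Differentiable ℝ γ) (hγp : ∀ t, γ (t + T) = γ t)
    (hγr : ∀ t, deriv γ t + γ t ^ 2 = f t)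
    (hδd : Differentiable ℝ δ) (hδp : ∀ t, δ (t + T) = δ t)
    (hδr : ∀ t, deriv δ t + δ t ^ 2 = f t) :
    γ = δ ∨ ((∫ t in (0:ℝ)..T, γ t) + (∫ t in (0:ℝ)..T, δ t) = 0 ∧
      (∫ t in (0:ℝ)..T, γ t) - (∫ t in (0:ℝ)..T, δ t) ≠ 0) := by
  set g : ℝ → ℝ := fun t => γ t + δ t with hg
  have hgc : Continuous g := (hγd.continuous.add hδd.continuous)
  set F : ℝ → ℝ := fun t => ∫ s in (0:ℝ)..t, g s with hF
  have hFd : ∀ t, HasDerivAt F (g t) t := by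
    intro t
    exact intervalIntegral.integral_hasDerivAt_right (hgc.intervalIntegrable 0 t)
      (hgc.stronglyMeasurableAtFilter _ _) hgc.continuousAt
  set u : ℝ → ℝ := fun t => γ t - δ t with hu
  have hud : ∀ t, HasDerivAt u (-(g t) * u t) t := by
    intro t
    have h := ((hγd t).hasDerivAt).sub ((hδd t).hasDerivAt)
    have heq : deriv γ t - deriv δ t = -(g t) * u t := by
      have h1 := hγr t; have h2 := hδr t
      simp only [hg, hu]; nlinarith
    rwa [heq] at h
  set v : ℝ → ℝ := fun t => u t * Real.exp (F t) with hv
  have hvd : ∀ t, HasDerivAt v 0 t := by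
    intro t
    have h := (hud t).mul ((hFd t).exp)
    have heq : -(g t) * u t * Real.exp (F t) + u t * (Real.exp (F t) * g t) = 0 := by ring
    rwa [heq] at h
  have hvc : ∀ t, u t * Real.exp (F t) = u 0 := by
    intro t
    have h := is_const_of_deriv_eq_zero (f := v) (fun x => (hvd x).differentiableAt)
      (fun x => (hvd x).deriv) t 0
    simpa [hv, hF, intervalIntegral.integral_same] using h
  have hut : ∀ t, u t = u 0 * Real.exp (-(F t)) := by
    intro t
    have h := hvc t
    rw [Real.exp_neg]
    field_simp
    linarith [h]
  by_cases h0 : u 0 = 0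
  · left
    funext t
    have h := hut t
    rw [h0, zero_mul] at h
    have : γ t - δ t = 0 := h
    linarith
  · right
    have hFT : F T = 0 := by
      have hp : u T = u 0 := by
        simp only [hu]
        have h1 := hγp 0; have h2 := hδp 0
        rw [zero_add] at h1 h2
        rw [h1, h2]
      rw [hut T] at hp
      have h1 : Real.exp (-(F T)) = 1 := (mul_right_eq_self₀.mp hp).resolve_right h0
      rw [show (1:ℝ) = Real.exp 0 from Real.exp_zero.symm, Real.exp_eq_exp] at h1
      linarith
    constructor
    · have : (∫ t in (0:ℝ)..T, γ t) + (∫ t in (0:ℝ)..T, δ t) = ∫ t in (0:ℝ)..T, g t := by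
        rw [← intervalIntegral.integral_add (hγd.continuous.intervalIntegrable 0 T)
          (hδd.continuous.intervalIntegrable 0 T)]
      rw [this]
      exact hFT
    · have hsub : (∫ t in (0:ℝ)..T, γ t) - (∫ t in (0:ℝ)..T, δ t) = ∫ t in (0:ℝ)..T, u t := by
        rw [← intervalIntegral.integral_sub (hγd.continuous.intervalIntegrable 0 T)
          (hδd.continuous.intervalIntegrable 0 T)]
      rw [hsub]
      have hFc : Continuous F := by
        have : Differentiable ℝ F := fun x => (hFd x).differentiableAt
        exact this.continuous
      have hexpc : Continuous fun t => Real.exp (-(F t)) := (hFc.neg).rexp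
      have hiu : (∫ t in (0:ℝ)..T, u t) = u 0 * ∫ t in (0:ℝ)..T, Real.exp (-(F t)) := by
        rw [← intervalIntegral.integral_const_mul]
        exact intervalIntegral.integral_congr (fun t _ => hut t)
      rw [hiu]
      have hpos : 0 < ∫ t in (0:ℝ)..T, Real.exp (-(F t)) :=
        intervalIntegral.intervalIntegral_pos_of_pos (hexpc.intervalIntegrable 0 T)
          (fun x => Real.exp_pos _) hT
      exact mul_ne_zero h0 (ne_of_gt hpos)
/-- The Riccati equation `γ' + γ² = f` with `f ≥ 0`, `f ≢ 0`, continuous and `T`-periodic,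
has at most two differentiable `T`-periodic solutions. -/
theorem stmt_7 (T : ℝ) (hT : 0 < T) (f : ℝ → ℝ)
    (hf : Continuous f) (hfper : ∀ t, f (t + T) = f t)
    (hfnn : ∀ t, 0 ≤ f t) (t₀ : ℝ) (hfpos : 0 < f t₀)
    (γ₁ γ₂ γ₃ : ℝ → ℝ)
    (h1d : Differentiable ℝ γ₁) (h1p : ∀ t, γ₁ (t + T) = γ₁ t)
    (h1r : ∀ t, deriv γ₁ t + γ₁ t ^ 2 = f t)
    (h2d : Differentiable ℝ γ₂) (h2p : ∀ t, γ₂ (t + T) = γ₂ t)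
    (h2r : ∀ t, deriv γ₂ t + γ₂ t ^ 2 = f t)
    (h3d : Differentiable ℝ γ₃) (h3p : ∀ t, γ₃ (t + T) = γ₃ t)
    (h3r : ∀ t, deriv γ₃ t + γ₃ t ^ 2 = f t) :
    γ₁ = γ₂ ∨ γ₁ = γ₃ ∨ γ₂ = γ₃ := by
  rcases riccati_pair T hT f γ₁ γ₂ h1d h1p h1r h2d h2p h2r with h | ⟨e12, n12⟩
  · exact Or.inl h
  rcases riccati_pair T hT f γ₁ γ₃ h1d h1p h1r h3d h3p h3r with h | ⟨e13, _⟩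
  · exact Or.inr (Or.inl h)
  rcases riccati_pair T hT f γ₂ γ₃ h2d h2p h2r h3d h3p h3r with h | ⟨e23, _⟩
  · exact Or.inr (Or.inr h)
  exact absurd (by linarith : (∫ t in (0:ℝ)..T, γ₁ t) - (∫ t in (0:ℝ)..T, γ₂ t) = 0) n12
end

section
/- Let d ≥ 1, T > 0, let c : ℝ → ℝ be continuous and T-periodic, let A be a d×d real matrix, and let B : ℝ → (d×d real matrices) be differentiable, T-periodic, with each B(t) symmetric, satisfying B'(t)/2 + B(t)·B(t) = (c(t)/2)·A for all t ∈ ℝ. Set λ̄ := (1/T)∫₀ᵀ trace(B(s)) ds and β(t) := ∫₀ᵗ (λ̄ − trace(B(s))) ds, and define w : ℝ → (Fin d → ℝ) → ℝ by w(t,x) := exp(β(t) − (1/2)·xᵀB(t)x). Then w(t+T, x) = w(t, x) for all t and x, and for all (t,x): ∂w/∂t(t,x) − Σᵢ₌₁ᵈ ∂²w/∂xᵢ²(t,x) = λ̄·w(t,x) − (c(t)/2)·(xᵀAx)·w(t,x). -/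
open Matrix

private lemma update_hasDerivAt {d : ℕ} (x : Fin d → ℝ) (i k : Fin d) (s : ℝ) :
    HasDerivAt (fun s => Function.update x i s k) (if k = i then 1 else 0) s := by
  simp only [Function.update_apply]
  by_cases h : k = i
  · simpa [h] using hasDerivAt_id' s
  · simpa [h] using hasDerivAt_const s (x k)

private lemma update_quad_hasDerivAt {d : ℕ} (M : Matrix (Fin d) (Fin d) ℝ)
    (hM : Mᵀ = M) (x : Fin d → ℝ) (i : Fin d) (s : ℝ) :
    HasDerivAt (fun s => (Function.update x i s) ⬝ᵥ M.mulVec (Function.update x i s))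
      (2 * M.mulVec (Function.update x i s) i) s := by
  have hinner : ∀ j : Fin d,
      HasDerivAt (fun s => ∑ k, M j k * Function.update x i s k) (M j i) s := by
    intro j
    have := HasDerivAt.fun_sum (fun k (_ : k ∈ Finset.univ) =>
      (update_hasDerivAt x i k s).const_mul (M j k))
    simpa [mul_ite, Finset.sum_ite_eq'] using this
  have hsum := HasDerivAt.fun_sum (fun j (_ : j ∈ Finset.univ) =>
    (update_hasDerivAt x i j s).fun_mul (hinner j))
  have key : (∑ j, ((if j = i then (1:ℝ) else 0) * (∑ k, M j k * Function.update x i s k)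
        + Function.update x i s j * M j i)) = 2 * M.mulVec (Function.update x i s) i := by
    rw [Finset.sum_add_distrib]
    have h1 : ∑ j, (if j = i then (1:ℝ) else 0) * (∑ k, M j k * Function.update x i s k)
        = M.mulVec (Function.update x i s) i := by
      simp [ite_mul, Finset.sum_ite_eq', mulVec, dotProduct]
    have h2 : ∑ j, Function.update x i s j * M j i
        = M.mulVec (Function.update x i s) i := by
      simp only [mulVec, dotProduct]
      refine Finset.sum_congr rfl fun j _ => ?_
      have h3 : M i j = M j i := by
        conv_lhs => rw [← hM, Matrix.transpose_apply]
      rw [h3, mul_comm]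
    rw [h1, h2]; ring
  rw [key] at hsum
  simpa only [dotProduct, mulVec] using hsum

/-- The Gaussian ansatz `w(t,x) = exp(β(t) − ½ xᵀB(t)x)` built from a `T`-periodic solution
of the matrix Riccati equation `B'/2 + B² = (c/2)A` is `T`-periodic in time and solves
`∂ₜw − Δw = λ̄ w − (c/2)⟨x,Ax⟩ w` with `λ̄ = (1/T)∫₀ᵀ Tr B`. -/
theorem stmt_9 (d : ℕ) (hd : 1 ≤ d) (T : ℝ) (hT : 0 < T)
    (c : ℝ → ℝ) (hc : Continuous c) (hcper : ∀ t, c (t + T) = c t)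
    (A : Matrix (Fin d) (Fin d) ℝ)
    (B : ℝ → Matrix (Fin d) (Fin d) ℝ)
    (hBd : ∀ i j, Differentiable ℝ (fun t => B t i j))
    (hBper : ∀ t, B (t + T) = B t)
    (hBsym : ∀ t, (B t)ᵀ = B t)
    (hBeq : ∀ t, (1 / 2 : ℝ) • (Matrix.of fun i j => deriv (fun s => B s i j) t)
        + B t * B t = (c t / 2) • A)
    (lam : ℝ) (hlam : lam = (1 / T) * ∫ s in (0:ℝ)..T, (B s).trace)
    (β : ℝ → ℝ) (hβ : ∀ t, β t = ∫ s in (0:ℝ)..t, (lam - (B s).trace))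
    (w : ℝ → (Fin d → ℝ) → ℝ)
    (hw : ∀ t x, w t x = Real.exp (β t - (1 / 2) * (x ⬝ᵥ (B t).mulVec x))) :
    (∀ t x, w (t + T) x = w t x) ∧
    (∀ t x, deriv (fun s => w s x) t
        - ∑ i, deriv (deriv (fun s => w t (Function.update x i s))) (x i)
      = lam * w t x - (c t / 2) * (x ⬝ᵥ A.mulVec x) * w t x) := by
  have htr : Continuous fun s => (B s).trace := by
    simp only [Matrix.trace, Matrix.diag]
    exact continuous_finset_sum _ fun i _ => (hBd i i).continuous
  have hg : Continuous fun s => lam - (B s).trace := continuous_const.sub htr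
  constructor
  · intro t x
    have hβper : β (t + T) = β t := by
      have hper : Function.Periodic (fun s => lam - (B s).trace) T := fun s => by simp [hBper s]
      have hint : ∀ a b : ℝ,
          IntervalIntegrable (fun s => lam - (B s).trace) MeasureTheory.volume a b :=
        fun a b => hg.intervalIntegrable a b
      have h1 : β (t + T) = β t + ∫ s in t..(t+T), (lam - (B s).trace) := by
        rw [hβ, hβ, intervalIntegral.integral_add_adjacent_intervals (hint 0 t) (hint t (t+T))]
      have h2 : (∫ s in t..(t+T), (lam - (B s).trace))
          = ∫ s in (0:ℝ)..T, (lam - (B s).trace) := by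
        simpa using hper.intervalIntegral_add_eq t 0
      have h3 : (∫ s in (0:ℝ)..T, (lam - (B s).trace)) = 0 := by
        rw [intervalIntegral.integral_sub intervalIntegrable_const (htr.intervalIntegrable _ _)]
        simp only [intervalIntegral.integral_const, sub_zero, smul_eq_mul, hlam]
        field_simp
        ring
      rw [h1, h2, h3, add_zero]
    rw [hw, hw, hβper, hBper]
  · intro t x
    set M' : Matrix (Fin d) (Fin d) ℝ := Matrix.of fun i j => deriv (fun s => B s i j) t with hM'
    -- time derivative
    have hβd : HasDerivAt β (lam - (B t).trace) t := by
      have h0 : HasDerivAt (fun u => ∫ s in (0:ℝ)..u, (lam - (B s).trace))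
          (lam - (B t).trace) t := (hg.integral_hasStrictDerivAt 0 t).hasDerivAt
      exact h0.congr_of_eventuallyEq (Filter.Eventually.of_forall fun u => hβ u)
    have hqd : HasDerivAt (fun u => x ⬝ᵥ (B u).mulVec x) (x ⬝ᵥ M'.mulVec x) t := by
      simp only [hM', dotProduct, mulVec, Matrix.of_apply]
      refine HasDerivAt.fun_sum fun j _ => ?_
      exact (HasDerivAt.fun_sum fun k _ => ((hBd j k) t).hasDerivAt.mul_const (x k)).const_mul (x j)
    have hwt : HasDerivAt (fun s => w s x)
        ((lam - (B t).trace - (1/2) * (x ⬝ᵥ M'.mulVec x)) * w t x) t := by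
      have hE : HasDerivAt (fun s => β s - (1/2) * (x ⬝ᵥ (B s).mulVec x))
          ((lam - (B t).trace) - (1/2) * (x ⬝ᵥ M'.mulVec x)) t := hβd.sub (hqd.const_mul (1/2))
      have h2 := hE.exp
      rw [← hw t x] at h2
      exact (h2.congr_of_eventuallyEq
        (Filter.Eventually.of_forall fun u => hw u x)).congr_deriv (mul_comm _ _)
    -- spatial first derivative
    have hfirst : ∀ (i : Fin d) (s : ℝ), HasDerivAt (fun s => w t (Function.update x i s))
        (-((B t).mulVec (Function.update x i s) i) * w t (Function.update x i s)) s := by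
      intro i s
      have hq := update_quad_hasDerivAt (B t) (hBsym t) x i s
      have hE : HasDerivAt
          (fun s => β t - (1/2) * (Function.update x i s ⬝ᵥ (B t).mulVec (Function.update x i s)))
          (-((B t).mulVec (Function.update x i s) i)) s := by
        have h0 := (hasDerivAt_const s (β t)).fun_sub (hq.const_mul (1/2 : ℝ))
        exact h0.congr_deriv (by ring)
      have h2 := hE.exp
      rw [← hw t (Function.update x i s)] at h2
      exact (h2.congr_of_eventuallyEq
        (Filter.Eventually.of_forall fun u => hw t _)).congr_deriv (mul_comm _ _)
    -- spatial second derivative at x i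
    have hsecond : ∀ i : Fin d, deriv (deriv (fun s => w t (Function.update x i s))) (x i)
        = (-(B t) i i + ((B t).mulVec x i) * ((B t).mulVec x i)) * w t x := by
      intro i
      have hderiv1 : deriv (fun s => w t (Function.update x i s))
          = fun s => -((B t).mulVec (Function.update x i s) i) * w t (Function.update x i s) :=
        funext fun s => (hfirst i s).deriv
      rw [hderiv1]
      have hfac1 : HasDerivAt (fun s => -((B t).mulVec (Function.update x i s) i))
          (-(B t) i i) (x i) := by
        simp only [mulVec, dotProduct]
        have h0 := (HasDerivAt.fun_sum fun k (_ : k ∈ Finset.univ) =>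
          (update_hasDerivAt x i k (x i)).const_mul ((B t) i k)).fun_neg
        exact h0.congr_deriv (by simp [mul_ite, Finset.sum_ite_eq'])
      have hfac2 := hfirst i (x i)
      rw [Function.update_eq_self] at hfac2
      have hprod := hfac1.fun_mul hfac2
      rw [Function.update_eq_self] at hprod
      rw [hprod.deriv]
      ring
    have hΔ : ∑ i, deriv (deriv (fun s => w t (Function.update x i s))) (x i)
        = (-(B t).trace + x ⬝ᵥ ((B t) * (B t)).mulVec x) * w t x := by
      rw [Finset.sum_congr rfl fun i _ => hsecond i, ← Finset.sum_mul]
      congr 1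
      rw [Finset.sum_add_distrib]
      congr 1
      · simp [Matrix.trace, Matrix.diag]
      · have hsym' : x ᵥ* B t = B t *ᵥ x := by
          calc x ᵥ* B t = x ᵥ* (B t)ᵀ := by rw [hBsym t]
            _ = B t *ᵥ x := Matrix.vecMul_transpose _ _
        rw [← Matrix.mulVec_mulVec, Matrix.dotProduct_mulVec, hsym']
        simp [dotProduct]
    have hric : (1/2) * (x ⬝ᵥ M'.mulVec x) + x ⬝ᵥ ((B t) * (B t)).mulVec x
        = (c t / 2) * (x ⬝ᵥ A.mulVec x) := by
      have h := congrArg (fun N => x ⬝ᵥ N.mulVec x) (hBeq t)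
      simp only [Matrix.add_mulVec, Matrix.smul_mulVec, dotProduct_add, dotProduct_smul,
        smul_dotProduct, smul_eq_mul] at h
      rw [hM']
      convert h using 3 <;> norm_num
    rw [hwt.deriv, hΔ]
    linear_combination (-(w t x)) * hric
end

section
/- Let T > 0 and λ ∈ ℝ. Let α, β : ℝ → ℝ be continuously differentiable and T-periodic, and let c : ℝ → ℝ satisfy α'(t) + λ·α(t) = c(t) and −β'(t) + λ·β(t) = α(t) for all t ∈ ℝ. Then ∫₀ᵀ α(t)² dt = ∫₀ᵀ β(t)·c(t) dt. -/
/-- Integration by parts identity: if `α' + λα = c` and `−β' + λβ = α` with `α, β`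
continuously differentiable and `T`-periodic, then `∫₀ᵀ α² = ∫₀ᵀ β c`. -/
theorem stmt_11 (T : ℝ) (hT : 0 < T) (lam : ℝ) (α β c : ℝ → ℝ)
    (hα : ContDiff ℝ 1 α) (hβ : ContDiff ℝ 1 β)
    (hαper : ∀ t, α (t + T) = α t) (hβper : ∀ t, β (t + T) = β t)
    (h1 : ∀ t, deriv α t + lam * α t = c t)
    (h2 : ∀ t, -deriv β t + lam * β t = α t) :
    ∫ t in (0:ℝ)..T, α t ^ 2 = ∫ t in (0:ℝ)..T, β t * c t := by
  have hαd : Differentiable ℝ α := hα.differentiable one_ne_zero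
  have hβd : Differentiable ℝ β := hβ.differentiable one_ne_zero
  have hα' : Continuous (deriv α) := (hα.continuous_deriv le_rfl)
  have hβ' : Continuous (deriv β) := (hβ.continuous_deriv le_rfl)
  have hfderiv : ∀ t, deriv (fun t => α t * β t) t
      = deriv α t * β t + α t * deriv β t := by
    intro t
    exact deriv_mul (hαd t) (hβd t)
  have hint : ∫ t in (0:ℝ)..T, deriv (fun t => α t * β t) t = 0 := by
    rw [intervalIntegral.integral_deriv_eq_sub (f := fun t => α t * β t) (fun t _ => (hαd t).mul (hβd t))]
    · have := hαper 0
      have := hβper 0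
      simp only [zero_add] at *
      rw [this]
      have h0 : α T = α 0 := by simpa using hαper 0
      rw [h0]; ring
    · apply Continuous.intervalIntegrable
      have : Continuous fun t => deriv α t * β t + α t * deriv β t :=
        (hα'.mul hβd.continuous).add (hαd.continuous.mul hβ')
      exact this.congr fun t => (hfderiv t).symm
  have key : ∀ t, α t ^ 2 - β t * c t = -(deriv (fun t => α t * β t) t) := by
    intro t
    rw [hfderiv t, ← h1 t, ← h2 t]
    ring
  have i1 : IntervalIntegrable (fun t => α t ^ 2) MeasureTheory.volume 0 T :=
    ((hαd.continuous.pow 2)).intervalIntegrable _ _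
  have i2 : IntervalIntegrable (fun t => β t * c t) MeasureTheory.volume 0 T := by
    have hc : Continuous c := by
      have : Continuous fun t => deriv α t + lam * α t :=
        hα'.add (continuous_const.mul hαd.continuous)
      exact this.congr h1
    exact (hβd.continuous.mul hc).intervalIntegrable _ _
  have : (∫ t in (0:ℝ)..T, α t ^ 2) - ∫ t in (0:ℝ)..T, β t * c t
      = ∫ t in (0:ℝ)..T, (α t ^ 2 - β t * c t) := (intervalIntegral.integral_sub i1 i2).symm
  have h3 : ∫ t in (0:ℝ)..T, (α t ^ 2 - β t * c t) = 0 := by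
    calc ∫ t in (0:ℝ)..T, (α t ^ 2 - β t * c t)
        = ∫ t in (0:ℝ)..T, -(deriv (fun t => α t * β t) t) := by
          apply intervalIntegral.integral_congr; intro t _; exact key t
      _ = 0 := by rw [intervalIntegral.integral_neg, hint, neg_zero]
  linarith [this, h3]
end

section
/- Let k be a natural number with k ≥ 1, let ω : ℝ → ℝ be ω(t) := (cos(t+π) + sin(t+π))/2, and define F : ℝ → ℝ by F(t) := ω(t)^{2k−2} · ((2k−1)·ω'(t) + ω(t)). Then F is differentiable at π and F'(π) = (2k−1)(2k−2)/2^{2k−1}. In particular F'(π) = 0 if and only if k = 1. -/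
/-- Key computation for symmetry breaking: for `ω(t) = (cos(t+π)+sin(t+π))/2` and
`F = ω^(2k−2)((2k−1)ω' + ω)`, the derivative of `F` at `π` equals
`(2k−1)(2k−2)/2^(2k−1)`, which vanishes iff `k = 1`. -/
theorem stmt_14 (k : ℕ) (hk : 1 ≤ k) (ω : ℝ → ℝ)
    (hω : ∀ t, ω t = (Real.cos (t + Real.pi) + Real.sin (t + Real.pi)) / 2)
    (F : ℝ → ℝ)
    (hF : ∀ t, F t = ω t ^ (2 * k - 2) * ((2 * (k : ℝ) - 1) * deriv ω t + ω t)) :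
    DifferentiableAt ℝ F Real.pi ∧
    deriv F Real.pi = (2 * (k : ℝ) - 1) * (2 * (k : ℝ) - 2) / 2 ^ (2 * k - 1) ∧
    (deriv F Real.pi = 0 ↔ k = 1) := by
  obtain ⟨m, rfl⟩ : ∃ m, k = m + 1 := ⟨k - 1, (Nat.succ_pred_eq_of_pos hk).symm⟩
  have hω' : ∀ t : ℝ, HasDerivAt ω ((Real.cos (t + Real.pi) - Real.sin (t + Real.pi)) / 2) t := by
    intro t
    have h1 : HasDerivAt (fun t : ℝ => t + Real.pi) 1 t := (hasDerivAt_id t).add_const _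
    have hc := (Real.hasDerivAt_cos (t + Real.pi)).comp t h1
    have hs := (Real.hasDerivAt_sin (t + Real.pi)).comp t h1
    have h := (hc.add hs).div_const 2
    have hfun : ω = fun t => (Real.cos (t + Real.pi) + Real.sin (t + Real.pi)) / 2 := funext hω
    rw [hfun]
    exact h.congr_deriv (by ring)
  have hderiv : ∀ t, deriv ω t = (Real.cos (t + Real.pi) - Real.sin (t + Real.pi)) / 2 :=
    fun t => (hω' t).deriv
  have hFeq : F = fun t => ω t ^ (2 * m) *
      ((2 * (m : ℝ) + 1) * ((Real.cos (t + Real.pi) - Real.sin (t + Real.pi)) / 2) + ω t) := by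
    funext t
    rw [hF t, hderiv t]
    have he : 2 * (m + 1) - 2 = 2 * m := by omega
    have hc : (2 * ((m : ℝ) + 1) - 1) = 2 * (m : ℝ) + 1 := by ring
    rw [he]
    push_cast
    ring
  -- values at π
  have hcos : Real.cos (Real.pi + Real.pi) = 1 := by rw [← two_mul]; exact Real.cos_two_pi
  have hsin : Real.sin (Real.pi + Real.pi) = 0 := by rw [← two_mul]; exact Real.sin_two_pi
  have hωπ : ω Real.pi = 1 / 2 := by rw [hω, hcos, hsin]; norm_num
  have hA : HasDerivAt ω (1 / 2) Real.pi := by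
    have := hω' Real.pi
    rwa [hcos, hsin, show ((1 : ℝ) - 0) / 2 = 1 / 2 by norm_num] at this
  -- second factor derivative
  have hB : HasDerivAt (fun t => (2 * (m : ℝ) + 1) *
      ((Real.cos (t + Real.pi) - Real.sin (t + Real.pi)) / 2) + ω t)
      ((2 * (m : ℝ) + 1) * (-1 / 2) + 1 / 2) Real.pi := by
    have h1 : HasDerivAt (fun t : ℝ => t + Real.pi) 1 Real.pi := (hasDerivAt_id _).add_const _
    have hc : HasDerivAt (fun t : ℝ => Real.cos (t + Real.pi)) (-Real.sin (Real.pi + Real.pi)) Real.pi := by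
      simpa using h1.cos
    have hs : HasDerivAt (fun t : ℝ => Real.sin (t + Real.pi)) (Real.cos (Real.pi + Real.pi)) Real.pi := by
      simpa using h1.sin
    have h := (((hc.sub hs).div_const 2).const_mul (2 * (m : ℝ) + 1)).add hA
    exact h.congr_deriv (by rw [hcos, hsin]; ring)
  have hP : HasDerivAt (fun t => ω t ^ (2 * m))
      ((2 * m : ℕ) * ω Real.pi ^ (2 * m - 1) * (1 / 2)) Real.pi := hA.pow _
  have hFd : HasDerivAt F
      (((2 * m : ℕ) * ω Real.pi ^ (2 * m - 1) * (1 / 2)) *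
        ((2 * (m : ℝ) + 1) * ((Real.cos (Real.pi + Real.pi) - Real.sin (Real.pi + Real.pi)) / 2) + ω Real.pi)
      + ω Real.pi ^ (2 * m) * ((2 * (m : ℝ) + 1) * (-1 / 2) + 1 / 2)) Real.pi := by
    rw [hFeq]
    exact hP.mul hB
  have hval : deriv F Real.pi = (2 * ((m : ℝ) + 1) - 1) * (2 * ((m : ℝ) + 1) - 2) / 2 ^ (2 * (m + 1) - 1) := by
    rw [hFd.deriv, hcos, hsin, hωπ]
    have he : 2 * (m + 1) - 1 = 2 * m + 1 := by omega
    rw [he]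
    rcases Nat.eq_zero_or_pos m with hm | hm
    · subst hm; norm_num
    · obtain ⟨n, rfl⟩ : ∃ n, m = n + 1 := ⟨m - 1, (Nat.succ_pred_eq_of_pos hm).symm⟩
      have h1 : 2 * (n + 1) - 1 = 2 * n + 1 := by omega
      have h2 : 2 * (n + 1) = 2 * n + 2 := by ring
      rw [h1, h2]
      push_cast
      field_simp
      have h3 : ((1:ℝ)/2)^(n*2) * 2^(n*2) = 1 := by rw [← mul_pow]; norm_num
      linear_combination (20*(n:ℝ) + 8*(n:ℝ)^2 + 12) * h3
  refine ⟨hFd.differentiableAt, ?_, ?_⟩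
  · rw [hval]; push_cast; ring_nf
  · rw [hval]
    constructor
    · intro h
      have h2 : (2 * ((m : ℝ) + 1) - 1) * (2 * ((m : ℝ) + 1) - 2) = 0 := by
        have hp : (2 : ℝ) ^ (2 * (m + 1) - 1) ≠ 0 := by positivity
        field_simp at h
        linear_combination h
      have hm : (m : ℝ) = 0 := by
        rcases mul_eq_zero.mp h2 with h | h
        · exfalso; have : (0:ℝ) ≤ (m:ℝ) := Nat.cast_nonneg m; nlinarith
        · linarith
      have : m = 0 := by exact_mod_cast hm
      omega
    · intro h
      have : m = 0 := by omega
      subst this; norm_num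
end

section
/- Let k be a natural number with k ≥ 2, let a ∈ ℝ with a ≠ 0, and let ω : ℝ → ℝ be ω(t) := (cos(t+π) + sin(t+π))/2. Suppose Ψ : ℝ → ℝ is differentiable and satisfies −Ψ'(t) + Ψ(t) = a·ω(t)^{2k−1} for all t ∈ ℝ. Then Ψ is not symmetric with respect to t = π: there exists t ∈ ℝ with Ψ(π + t) ≠ Ψ(π − t). -/
open Real

/-- Symmetry breaking: for `k ≥ 2` and `a ≠ 0`, no solution `Ψ` of
`−Ψ' + Ψ = a ω^(2k−1)`, with `ω(t) = (cos(t+π)+sin(t+π))/2`, is symmetric about `t = π`. -/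
theorem stmt_15 (k : ℕ) (hk : 2 ≤ k) (a : ℝ) (ha : a ≠ 0) (ω Ψ : ℝ → ℝ)
    (hω : ∀ t, ω t = (Real.cos (t + Real.pi) + Real.sin (t + Real.pi)) / 2)
    (hΨ : Differentiable ℝ Ψ)
    (heq : ∀ t, -deriv Ψ t + Ψ t = a * ω t ^ (2 * k - 1)) :
    ∃ t, Ψ (Real.pi + t) ≠ Ψ (Real.pi - t) := by
  by_contra h
  push_neg at h
  set n := 2 * k - 1 with hn
  have hn3 : 3 ≤ n := by omega
  have hodd : Odd n := ⟨k - 1, by omega⟩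
  have heven : Even (n - 1) := ⟨k - 1, by omega⟩
  have hwp : ∀ t, ω (π + t) = (Real.cos t + Real.sin t) / 2 := by
    intro t
    rw [hω, show π + t + π = t + 2 * π by ring, Real.cos_add_two_pi, Real.sin_add_two_pi]
  have hwm : ∀ t, ω (π - t) = (Real.cos t - Real.sin t) / 2 := by
    intro t
    rw [hω, show π - t + π = -t + 2 * π by ring, Real.cos_add_two_pi, Real.sin_add_two_pi,
      Real.cos_neg, Real.sin_neg]
    ring
  have hd : ∀ t, deriv Ψ t = Ψ t - a * ω t ^ n := by
    intro t; have := heq t; linarith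
  -- derivative relation from symmetry
  have hds : ∀ t, deriv Ψ (π + t) * 1 = deriv Ψ (π - t) * (-1) := by
    intro t
    have h1 : HasDerivAt (fun s => Ψ (π + s)) (deriv Ψ (π + t) * 1) t :=
      (hΨ (π + t)).hasDerivAt.comp t ((hasDerivAt_id t).const_add π)
    have h2 : HasDerivAt (fun s => Ψ (π - s)) (deriv Ψ (π - t) * (-1)) t :=
      (hΨ (π - t)).hasDerivAt.comp t ((hasDerivAt_id t).const_sub π)
    have heqf : (fun s => Ψ (π + s)) = (fun s => Ψ (π - s)) := funext h
    rw [← heqf] at h2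
    exact h1.unique h2
  -- key identity
  have hkey : ∀ t, Ψ (π + t) + Ψ (π - t)
      = a * (((Real.cos t + Real.sin t) / 2) ^ n + ((Real.cos t - Real.sin t) / 2) ^ n) := by
    intro t
    have e1 := hd (π + t)
    have e2 := hd (π - t)
    have e3 := hds t
    rw [hwp t] at e1
    rw [hwm t] at e2
    rw [mul_add]
    linarith
  have hfun : (fun t => Ψ (π + t) + Ψ (π - t))
      = fun t => a * (((Real.cos t + Real.sin t) / 2) ^ n + ((Real.cos t - Real.sin t) / 2) ^ n) :=
    funext hkey
  have hL : HasDerivAt (fun t => Ψ (π + t) + Ψ (π - t))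
      (deriv Ψ (π + π / 2) * 1 + deriv Ψ (π - π / 2) * (-1)) (π / 2) := by
    have h1 : HasDerivAt (fun s => Ψ (π + s)) (deriv Ψ (π + π / 2) * 1) (π / 2) :=
      (hΨ _).hasDerivAt.comp _ ((hasDerivAt_id _).const_add π)
    have h2 : HasDerivAt (fun s => Ψ (π - s)) (deriv Ψ (π - π / 2) * (-1)) (π / 2) :=
      (hΨ _).hasDerivAt.comp _ ((hasDerivAt_id _).const_sub π)
    exact h1.add h2
  have hG : HasDerivAt
      (fun t => a * (((Real.cos t + Real.sin t) / 2) ^ n + ((Real.cos t - Real.sin t) / 2) ^ n))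
      (a * ((n : ℝ) * ((Real.cos (π/2) + Real.sin (π/2)) / 2) ^ (n - 1)
              * ((-Real.sin (π/2) + Real.cos (π/2)) / 2)
          + (n : ℝ) * ((Real.cos (π/2) - Real.sin (π/2)) / 2) ^ (n - 1)
              * ((-Real.sin (π/2) - Real.cos (π/2)) / 2))) (π / 2) := by
    have hu : HasDerivAt (fun t => (Real.cos t + Real.sin t) / 2)
        ((-Real.sin (π/2) + Real.cos (π/2)) / 2) (π / 2) :=
      ((Real.hasDerivAt_cos _).add (Real.hasDerivAt_sin _)).div_const 2
    have hv : HasDerivAt (fun t => (Real.cos t - Real.sin t) / 2)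
        ((-Real.sin (π/2) - Real.cos (π/2)) / 2) (π / 2) :=
      ((Real.hasDerivAt_cos _).sub (Real.hasDerivAt_sin _)).div_const 2
    exact ((hu.pow n).add (hv.pow n)).const_mul a
  rw [hfun] at hL
  have hu2 := hL.unique hG
  -- now evaluate everything at π/2
  have e1 := hd (π + π / 2)
  have e2 := hd (π - π / 2)
  have e3 := h (π / 2)
  rw [hwp (π / 2)] at e1
  rw [hwm (π / 2)] at e2
  rw [Real.cos_pi_div_two, Real.sin_pi_div_two] at hu2 e1 e2
  have hneg : ((0 - 1 : ℝ) / 2) ^ n = -(((0 + 1 : ℝ) / 2) ^ n) := by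
    rw [show ((0 - 1 : ℝ) / 2) = -((0 + 1 : ℝ) / 2) by ring, hodd.neg_pow]
  have hneg' : ((0 - 1 : ℝ) / 2) ^ (n - 1) = ((0 + 1 : ℝ) / 2) ^ (n - 1) := by
    rw [show ((0 - 1 : ℝ) / 2) = -((0 + 1 : ℝ) / 2) by ring, heven.neg_pow]
  rw [hneg'] at hu2
  -- hu2 : Ψ'(π+π/2) - Ψ'(π-π/2) = a * (-n (1/2)^{n-1})
  -- combined with e1, e2, e3 and hneg, derive contradiction
  have hpos : (0 : ℝ) < ((0 + 1 : ℝ) / 2) ^ (n - 1) := by positivity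
  have hhalf : ((0 + 1 : ℝ) / 2) ^ n = ((0 + 1 : ℝ) / 2) ^ (n - 1) * (1 / 2) := by
    conv_lhs => rw [show n = (n - 1) + 1 by omega, pow_succ]
    norm_num
  have hne1 : (n : ℝ) ≠ 1 := by
    intro hc
    have : n = 1 := by exact_mod_cast hc
    omega
  have hn1 : (1 : ℝ) < (n : ℝ) := by exact_mod_cast (by omega : 1 < n)
  -- From e1,e2,e3: Ψ'(π+π/2)*1 + Ψ'(π-π/2)*(-1) = a*((0-1)/2)^n - a*((0+1)/2)^n = -2a*(1/2)^n
  have key : -2 * (a * ((0 + 1 : ℝ) / 2) ^ n)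
      = a * ((n : ℝ) * ((0 + 1 : ℝ) / 2) ^ (n - 1) * ((-1 + 0) / 2)
          + (n : ℝ) * ((0 + 1 : ℝ) / 2) ^ (n - 1) * ((-1 - 0) / 2)) := by
    have hae : a * ((0 - 1 : ℝ) / 2) ^ n = -(a * ((0 + 1 : ℝ) / 2) ^ n) := by
      rw [hneg]; ring
    rw [← hu2]
    linarith [hae]
  rw [hhalf] at key
  have : a * ((n : ℝ) - 1) * ((0 + 1 : ℝ) / 2) ^ (n - 1) = 0 := by nlinarith [key]
  have := mul_eq_zero.mp this
  rcases this with h' | h'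
  · rcases mul_eq_zero.mp h' with h'' | h''
    · exact ha h''
    · linarith
  · linarith
end

section
/- Let T > 0, μ > 0, M ≥ 0, and λ ∈ ℝ. Let m : ℝ → ℝ → ℝ be continuous (as a function of (t,x)), T-periodic in the first variable, 1-periodic in the second variable, with |m(t,x)| ≤ M for all (t,x). Let u : ℝ → ℝ → ℝ be everywhere positive, twice continuously differentiable as a function of (t,x), T-periodic in the first variable and 1-periodic in the second variable, and suppose μ·(∂u/∂t(t,x) − ∂²u/∂x²(t,x)) = (λ + m(t,x))·u(t,x) for all (t,x). Then |λ| ≤ M. -/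
open Set Filter Topology

private lemma deriv2_nonpos_of_isLocalMax {f : ℝ → ℝ} {x : ℝ}
    (hf : Differentiable ℝ f) (hd : DifferentiableAt ℝ (deriv f) x)
    (hx : IsLocalMax f x) : deriv (deriv f) x ≤ 0 := by
  by_contra h
  push_neg at h
  have h0 : deriv f x = 0 := hx.deriv_eq_zero
  have hs : Tendsto (slope (deriv f) x) (𝓝[≠] x) (𝓝 (deriv (deriv f) x)) :=
    hasDerivAt_iff_tendsto_slope.mp hd.hasDerivAt
  have hev : ∀ᶠ y in 𝓝[≠] x, 0 < slope (deriv f) x y := hs.eventually (lt_mem_nhds h)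
  have hev' : ∀ᶠ y in 𝓝[>] x, 0 < deriv f y ∧ f y ≤ f x := by
    have h1 : ∀ᶠ y in 𝓝[>] x, 0 < slope (deriv f) x y :=
      hev.filter_mono (nhdsWithin_mono x fun y hy => ne_of_gt hy)
    have h2 : ∀ᶠ y in 𝓝[>] x, f y ≤ f x := hx.filter_mono nhdsWithin_le_nhds
    filter_upwards [h1, h2, self_mem_nhdsWithin] with y hy1 hy2 hy3
    refine ⟨?_, hy2⟩
    have : slope (deriv f) x y = deriv f y / (y - x) := by
      simp [slope_def_field, h0, div_eq_mul_inv]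
    rw [this] at hy1
    have hyx : 0 < y - x := sub_pos.mpr hy3
    have hmul := mul_pos hy1 hyx
    rwa [div_mul_cancel₀ _ hyx.ne'] at hmul
  obtain ⟨b, hb, hIoo⟩ := (nhdsGT_basis x).eventually_iff.mp hev'
  set c := (x + b) / 2 with hc
  have hxc : x < c := by rw [hc]; linarith
  have hcb : c < b := by rw [hc]; linarith
  obtain ⟨ξ, hξ, hξeq⟩ := exists_deriv_eq_slope f hxc (hf.continuous.continuousOn)
    (hf.differentiableOn)
  have hξb : ξ ∈ Ioo x b := ⟨hξ.1, hξ.2.trans hcb⟩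
  have h3 := (hIoo hξb).1
  have h4 := (hIoo ⟨hxc, hcb⟩).2
  rw [hξeq] at h3
  have hcx : 0 < c - x := sub_pos.mpr hxc
  have hmul := mul_pos h3 hcx
  rw [div_mul_cancel₀ _ hcx.ne'] at hmul
  linarith

private lemma deriv2_nonneg_of_isLocalMin {f : ℝ → ℝ} {x : ℝ}
    (hf : Differentiable ℝ f) (hd : DifferentiableAt ℝ (deriv f) x)
    (hx : IsLocalMin f x) : 0 ≤ deriv (deriv f) x := by
  have hneg : deriv (deriv (fun y => -f y)) x ≤ 0 := by
    apply deriv2_nonpos_of_isLocalMax hf.neg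
    · have : deriv (fun y => -f y) = fun y => -deriv f y := by
        funext y; exact deriv.neg
      show DifferentiableAt ℝ (deriv fun y => -f y) x; rw [this]; exact hd.neg
    · exact hx.neg
  have : deriv (deriv (fun y => -f y)) x = -deriv (deriv f) x := by
    have h1 : deriv (fun y => -f y) = fun y => -deriv f y := by
      funext y; exact deriv.neg
    rw [h1, deriv.fun_neg]
  linarith [this ▸ hneg]

/-- Uniform eigenvalue bound: if `u > 0` is a time-space periodic solution of
`μ(∂ₜu − ∂ₓₓu) = (λ + m)u` with `|m| ≤ M`, then `|λ| ≤ M`. -/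
theorem stmt_16 (T μ M lam : ℝ) (hT : 0 < T) (hμ : 0 < μ) (hM : 0 ≤ M)
    (m u : ℝ → ℝ → ℝ)
    (hm : Continuous fun p : ℝ × ℝ => m p.1 p.2)
    (hmT : ∀ t x, m (t + T) x = m t x) (hmX : ∀ t x, m t (x + 1) = m t x)
    (hmb : ∀ t x, |m t x| ≤ M)
    (hupos : ∀ t x, 0 < u t x)
    (hu : ContDiff ℝ 2 fun p : ℝ × ℝ => u p.1 p.2)
    (huT : ∀ t x, u (t + T) x = u t x) (huX : ∀ t x, u t (x + 1) = u t x)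
    (heq : ∀ t x, μ * (deriv (fun s => u s x) t - deriv (deriv (fun s => u t s)) x)
        = (lam + m t x) * u t x) :
    |lam| ≤ M := by
  set F : ℝ × ℝ → ℝ := fun p => u p.1 p.2 with hF
  set K : Set (ℝ × ℝ) := Icc 0 T ×ˢ Icc (0:ℝ) 1 with hK
  have hKc : IsCompact K := (isCompact_Icc).prod isCompact_Icc
  have hKne : K.Nonempty := ⟨(0, 0), ⟨⟨le_rfl, hT.le⟩, ⟨le_rfl, zero_le_one⟩⟩⟩
  -- reduction to the fundamental domain
  have hred : ∀ t x : ℝ, ∃ p ∈ K, u p.1 p.2 = u t x := by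
    intro t x
    refine ⟨(t - ⌊t / T⌋ * T, Int.fract x), ⟨⟨Int.sub_floor_div_mul_nonneg t hT,
      (Int.sub_floor_div_mul_lt t hT).le⟩, ⟨Int.fract_nonneg x, (Int.fract_lt_one x).le⟩⟩, ?_⟩
    have hpt : Function.Periodic (fun s => u s (Int.fract x)) T := fun s => huT s _
    have hpx : Function.Periodic (fun y => u t y) 1 := fun y => huX t y
    have h1 : u (t - ⌊t / T⌋ * T) (Int.fract x) = u t (Int.fract x) :=
      hpt.sub_int_mul_eq ⌊t / T⌋
    have h2 : u t (Int.fract x) = u t x := by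
      have := hpx.sub_int_mul_eq (x := x) ⌊x⌋
      rw [mul_one] at this
      exact this
    simp only [h1, h2]
  -- the key pointwise estimate at an extremum
  have key : ∀ t₀ x₀ : ℝ,
      (∀ t x, u t x ≤ u t₀ x₀) → 0 ≤ lam + m t₀ x₀ := by
    intro t₀ x₀ hmax
    have hg : ContDiff ℝ 2 fun s => u s x₀ :=
      hu.comp (contDiff_id.prodMk contDiff_const)
    have hh : ContDiff ℝ 2 fun s => u t₀ s :=
      hu.comp (contDiff_const.prodMk contDiff_id)
    have hgmax : IsLocalMax (fun s => u s x₀) t₀ :=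
      Filter.Eventually.of_forall fun s => hmax s x₀
    have hhmax : IsLocalMax (fun s => u t₀ s) x₀ :=
      Filter.Eventually.of_forall fun s => hmax t₀ s
    have hg0 : deriv (fun s => u s x₀) t₀ = 0 := hgmax.deriv_eq_zero
    have hh' : Differentiable ℝ (fun s => u t₀ s) ∧
        ContDiff ℝ 1 (deriv fun s => u t₀ s) := by
      rw [show (2 : WithTop ℕ∞) = 1 + 1 from rfl, contDiff_succ_iff_deriv] at hh
      exact ⟨hh.1, hh.2.2⟩
    have hD : deriv (deriv fun s => u t₀ s) x₀ ≤ 0 :=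
      deriv2_nonpos_of_isLocalMax hh'.1 (hh'.2.differentiable one_ne_zero x₀) hhmax
    have he := heq t₀ x₀
    rw [hg0] at he
    have hup := hupos t₀ x₀
    nlinarith [mul_nonneg hμ.le (neg_nonneg.mpr hD)]
  have key' : ∀ t₀ x₀ : ℝ,
      (∀ t x, u t₀ x₀ ≤ u t x) → lam + m t₀ x₀ ≤ 0 := by
    intro t₀ x₀ hmin
    have hh : ContDiff ℝ 2 fun s => u t₀ s :=
      hu.comp (contDiff_const.prodMk contDiff_id)
    have hgmin : IsLocalMin (fun s => u s x₀) t₀ :=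
      Filter.Eventually.of_forall fun s => hmin s x₀
    have hhmin : IsLocalMin (fun s => u t₀ s) x₀ :=
      Filter.Eventually.of_forall fun s => hmin t₀ s
    have hg0 : deriv (fun s => u s x₀) t₀ = 0 := hgmin.deriv_eq_zero
    have hh' : Differentiable ℝ (fun s => u t₀ s) ∧
        ContDiff ℝ 1 (deriv fun s => u t₀ s) := by
      rw [show (2 : WithTop ℕ∞) = 1 + 1 from rfl, contDiff_succ_iff_deriv] at hh
      exact ⟨hh.1, hh.2.2⟩
    have hD : 0 ≤ deriv (deriv fun s => u t₀ s) x₀ :=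
      deriv2_nonneg_of_isLocalMin hh'.1 (hh'.2.differentiable one_ne_zero x₀) hhmin
    have he := heq t₀ x₀
    rw [hg0] at he
    have hup := hupos t₀ x₀
    nlinarith [mul_nonneg hμ.le hD]
  -- global max
  obtain ⟨pM, hpMK, hpM⟩ := hKc.exists_isMaxOn hKne
    (hu.continuous.continuousOn : ContinuousOn F K)
  obtain ⟨pm, hpmK, hpm⟩ := hKc.exists_isMinOn hKne
    (hu.continuous.continuousOn : ContinuousOn F K)
  have hgmax : ∀ t x, u t x ≤ u pM.1 pM.2 := by
    intro t x
    obtain ⟨p, hpK, hpe⟩ := hred t x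
    rw [← hpe]
    exact hpM hpK
  have hgmin : ∀ t x, u pm.1 pm.2 ≤ u t x := by
    intro t x
    obtain ⟨p, hpK, hpe⟩ := hred t x
    rw [← hpe]
    exact hpm hpK
  have h1 := key pM.1 pM.2 hgmax
  have h2 := key' pm.1 pm.2 hgmin
  have hb1 := abs_le.mp (hmb pM.1 pM.2)
  have hb2 := abs_le.mp (hmb pm.1 pm.2)
  rw [abs_le]
  constructor <;> linarith
end

section
/- Let λ ∈ ℝ and m : ℝ → ℝ → ℝ. Let φ, ψ : ℝ → ℝ → ℝ be such that for every (t,x) all the partial derivatives ∂φ/∂t, ∂φ/∂x, ∂²φ/∂x², ∂ψ/∂t, ∂ψ/∂x, ∂²ψ/∂x² exist, and suppose that for all (t,x): ∂φ/∂t − ∂²φ/∂x² + (∂φ/∂x)² = −λ − m and −∂ψ/∂t − ∂²ψ/∂x² + (∂ψ/∂x)² = −λ − m. Define α(t,x) := exp(−(φ(t,x)+ψ(t,x))/2) and β(t,x) := (φ(t,x)−ψ(t,x))/2. Then for all (t,x): (i) (1/2)·∂(α²)/∂t(t,x) + ∂/∂x(α(t,·)²·∂β/∂x(t,·))(x) =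 0, i.e. the x-derivative of s ↦ α(t,s)²·∂β/∂x(t,s) at x equals −(1/2) times the t-derivative of s ↦ α(s,x)² at t; and (ii) −∂²α/∂x²(t,x) = (λ + m(t,x) + ∂β/∂t(t,x) + (∂β/∂x(t,x))²)·α(t,x). -/
/-- From the coupled forward and backward Hamilton–Jacobi equations for `φ` and `ψ`,
the functions `α = exp(−(φ+ψ)/2)` and `β = (φ−ψ)/2` satisfy the continuity-type
equation `(1/2)∂ₜ(α²) + ∂ₓ(α² ∂ₓβ) = 0` and the elliptic-type equation
`−∂ₓₓα = (λ + m + ∂ₜβ + (∂ₓβ)²)α`. -/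
theorem stmt_18 (lam : ℝ) (m φ ψ : ℝ → ℝ → ℝ)
    (hφt : ∀ t x, DifferentiableAt ℝ (fun s => φ s x) t)
    (hφx : ∀ t x, DifferentiableAt ℝ (fun s => φ t s) x)
    (hφxx : ∀ t x, DifferentiableAt ℝ (deriv (fun s => φ t s)) x)
    (hψt : ∀ t x, DifferentiableAt ℝ (fun s => ψ s x) t)
    (hψx : ∀ t x, DifferentiableAt ℝ (fun s => ψ t s) x)
    (hψxx : ∀ t x, DifferentiableAt ℝ (deriv (fun s => ψ t s)) x)
    (hφeq : ∀ t x, deriv (fun s => φ s x) t - deriv (deriv (fun s => φ t s)) x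
        + (deriv (fun s => φ t s) x) ^ 2 = -lam - m t x)
    (hψeq : ∀ t x, -deriv (fun s => ψ s x) t - deriv (deriv (fun s => ψ t s)) x
        + (deriv (fun s => ψ t s) x) ^ 2 = -lam - m t x)
    (α β : ℝ → ℝ → ℝ)
    (hα : ∀ t x, α t x = Real.exp (-(φ t x + ψ t x) / 2))
    (hβ : ∀ t x, β t x = (φ t x - ψ t x) / 2) :
    (∀ t x, deriv (fun s => α t s ^ 2 * deriv (fun r => β t r) s) x
        = -(1 / 2) * deriv (fun s => α s x ^ 2) t) ∧
    (∀ t x, -deriv (deriv (fun s => α t s)) x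
        = (lam + m t x + deriv (fun s => β s x) t
            + (deriv (fun s => β t s) x) ^ 2) * α t x) := by
  -- spatial derivative of β
  have hβx : ∀ t x, deriv (fun s => β t s) x
      = (deriv (fun s => φ t s) x - deriv (fun s => ψ t s) x) / 2 := by
    intro t x
    have h : HasDerivAt (fun s => β t s)
        ((deriv (fun s => φ t s) x - deriv (fun s => ψ t s) x) / 2) x := by
      have h0 := ((hφx t x).hasDerivAt.sub (hψx t x).hasDerivAt).div_const 2
      have hfe : (fun s => β t s) = fun s => (φ t s - ψ t s) / 2 :=
        funext fun s => hβ t s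
      rw [hfe]; exact h0
    exact h.deriv
  -- time derivative of β
  have hβt : ∀ t x, deriv (fun s => β s x) t
      = (deriv (fun s => φ s x) t - deriv (fun s => ψ s x) t) / 2 := by
    intro t x
    have h : HasDerivAt (fun s => β s x)
        ((deriv (fun s => φ s x) t - deriv (fun s => ψ s x) t) / 2) t := by
      have h0 := ((hφt t x).hasDerivAt.sub (hψt t x).hasDerivAt).div_const 2
      have hfe : (fun s => β s x) = fun s => (φ s x - ψ s x) / 2 :=
        funext fun s => hβ s x
      rw [hfe]; exact h0
    exact h.deriv
  -- spatial derivative of α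
  have hαx : ∀ t x, HasDerivAt (fun s => α t s)
      (Real.exp (-(φ t x + ψ t x) / 2)
        * (-(deriv (fun s => φ t s) x + deriv (fun s => ψ t s) x) / 2)) x := by
    intro t x
    have h0 := (((hφx t x).hasDerivAt.add (hψx t x).hasDerivAt).neg.div_const 2).exp
    have hfe : (fun s => α t s) = fun s => Real.exp (-(φ t s + ψ t s) / 2) :=
      funext fun s => hα t s
    rw [hfe]; exact h0
  -- time derivative of α
  have hαt : ∀ t x, HasDerivAt (fun s => α s x)
      (Real.exp (-(φ t x + ψ t x) / 2)
        * (-(deriv (fun s => φ s x) t + deriv (fun s => ψ s x) t) / 2)) t := by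
    intro t x
    have h0 := (((hφt t x).hasDerivAt.add (hψt t x).hasDerivAt).neg.div_const 2).exp
    have hfe : (fun s => α s x) = fun s => Real.exp (-(φ s x + ψ s x) / 2) :=
      funext fun s => hα s x
    rw [hfe]; exact h0
  constructor
  · intro t x
    -- LHS
    have h1 : HasDerivAt (fun s => α t s ^ 2)
        ((2 : ℕ) * α t x ^ 1 * (Real.exp (-(φ t x + ψ t x) / 2)
          * (-(deriv (fun s => φ t s) x + deriv (fun s => ψ t s) x) / 2))) x :=
      (hαx t x).pow 2
    have h2 : HasDerivAt
        (fun s => (deriv (fun r => φ t r) s - deriv (fun r => ψ t r) s) / 2)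
        ((deriv (deriv (fun r => φ t r)) x - deriv (deriv (fun r => ψ t r)) x) / 2) x :=
      ((hφxx t x).hasDerivAt.sub (hψxx t x).hasDerivAt).div_const 2
    have hfe : (fun s => α t s ^ 2 * deriv (fun r => β t r) s)
        = fun s => α t s ^ 2
            * ((deriv (fun r => φ t r) s - deriv (fun r => ψ t r) s) / 2) :=
      funext fun s => by rw [hβx t s]
    have hL : deriv (fun s => α t s ^ 2 * deriv (fun r => β t r) s) x
        = ((2 : ℕ) * α t x ^ 1 * (Real.exp (-(φ t x + ψ t x) / 2)
            * (-(deriv (fun s => φ t s) x + deriv (fun s => ψ t s) x) / 2)))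
          * ((deriv (fun r => φ t r) x - deriv (fun r => ψ t r) x) / 2)
          + α t x ^ 2
            * ((deriv (deriv (fun r => φ t r)) x - deriv (deriv (fun r => ψ t r)) x) / 2) := by
      rw [hfe]; exact (h1.mul h2).deriv
    have hR : deriv (fun s => α s x ^ 2) t
        = (2 : ℕ) * α t x ^ 1 * (Real.exp (-(φ t x + ψ t x) / 2)
            * (-(deriv (fun s => φ s x) t + deriv (fun s => ψ s x) t) / 2)) :=
      ((hαt t x).pow 2).deriv
    rw [hL, hR, hα t x]
    push_cast
    linear_combination (-(Real.exp (-(φ t x + ψ t x) / 2) ^ 2) / 2)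
      * (hφeq t x - hψeq t x)
  · intro t x
    -- first derivative of α as a function of x
    have hfe : deriv (fun s => α t s)
        = fun s => Real.exp (-(φ t s + ψ t s) / 2)
            * (-(deriv (fun r => φ t r) s + deriv (fun r => ψ t r) s) / 2) :=
      funext fun s => (hαx t s).deriv
    have hE : HasDerivAt (fun s => Real.exp (-(φ t s + ψ t s) / 2))
        (Real.exp (-(φ t x + ψ t x) / 2)
          * (-(deriv (fun s => φ t s) x + deriv (fun s => ψ t s) x) / 2)) x :=
      (((hφx t x).hasDerivAt.add (hψx t x).hasDerivAt).neg.div_const 2).exp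
    have hD : HasDerivAt
        (fun s => -(deriv (fun r => φ t r) s + deriv (fun r => ψ t r) s) / 2)
        (-(deriv (deriv (fun r => φ t r)) x + deriv (deriv (fun r => ψ t r)) x) / 2) x :=
      ((hφxx t x).hasDerivAt.add (hψxx t x).hasDerivAt).neg.div_const 2
    have hL : deriv (deriv (fun s => α t s)) x
        = (Real.exp (-(φ t x + ψ t x) / 2)
            * (-(deriv (fun s => φ t s) x + deriv (fun s => ψ t s) x) / 2))
            * (-(deriv (fun r => φ t r) x + deriv (fun r => ψ t r) x) / 2)
          + Real.exp (-(φ t x + ψ t x) / 2)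
            * (-(deriv (deriv (fun r => φ t r)) x + deriv (deriv (fun r => ψ t r)) x) / 2) := by
      rw [hfe]; exact (hE.mul hD).deriv
    rw [hL, hβt t x, hβx t x, hα t x]
    linear_combination (-(Real.exp (-(φ t x + ψ t x) / 2)) / 2)
      * (hφeq t x + hψeq t x)
end
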